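/- For the L∞ metric in ℝ^d with k = m^d colors (m ≥ 2 an integer), the periodic tiling whose basic unit is a cube of side m partitioned into m^d unit-cube tiles, each colored with a distinct color, achieves minimal L∞ distance m−1 between same-colored points in different tiles, hence L∞ fault tolerance (m−1)/2; moreover no tiling of ℝ^d with k = m^d colors and tiles of volume at most 1 achieves L∞ fault tolerance greater than (m−1)/2. -/

import Mathlib

open MeasureTheory


/-- The closed axis-parallel unit cube in ℝ^d (with the sup metric, i.e. `Fin d → ℝ`)
with lower corner `z ∈ ℤ^d`. -/
def intUnitCube (d : ℕ) (z : Fin d → ℤ) : Set (Fin d → ℝ) :=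
  {x | ∀ i, x i ∈ Set.Icc (z i : ℝ) ((z i : ℝ) + 1)}

/-- The periodic coloring with m^d colors: each cube is colored by its corner reduced
mod m in every coordinate, so within each m×⋯×m block every color appears exactly once. -/
def cubeColor (d m : ℕ) (z : Fin d → ℤ) : Fin d → ZMod m := fun i => (z i : ZMod m)


section aux
open Set Pointwise
open scoped ENNReal


lemma IcoAddIco {a b c e : ℝ} (h1 : a < b) (h2 : c < e) :
    Set.Ico a b + Set.Ico c e = Set.Ico (a+c) (b+e) := by
  apply Set.Subset.antisymm
  · rintro x ⟨u, hu, v, hv, rfl⟩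
    exact ⟨add_le_add hu.1 hv.1, add_lt_add hu.2 hv.2⟩
  · rintro x ⟨hx1, hx2⟩
    rcases lt_or_ge (x - c) b with h | h
    · exact ⟨x - c, ⟨by linarith, h⟩, c, ⟨le_refl c, h2⟩, by ring⟩
    · refine ⟨(b + max a (x - e))/2, ⟨?_, ?_⟩, x - (b + max a (x - e))/2, ⟨?_, ?_⟩, by ring⟩
      · have := le_max_left a (x - e); linarith
      · have h3 : x - e < b := by linarith
        have := max_lt h1 h3; linarith
      · -- c ≤ x - u : u ≤ x - c, u < b ≤ x - c
        have h3 : x - e < b := by linarith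
        have := max_lt h1 h3; linarith
      · -- x - u < e : u > x - e
        have := le_max_right a (x - e); linarith

/-- half-open box -/
def hbox {d : ℕ} (p q : Fin d → ℝ) : Set (Fin d → ℝ) := {x | ∀ i, x i ∈ Set.Ico (p i) (q i)}

lemma hbox_eq_pi {d : ℕ} (p q : Fin d → ℝ) :
    hbox p q = Set.pi Set.univ (fun i => Set.Ico (p i) (q i)) := by
  ext x; simp [hbox, Set.mem_pi]

lemma measurableSet_hbox {d : ℕ} (p q : Fin d → ℝ) : MeasurableSet (hbox p q) := by
  rw [hbox_eq_pi]
  exact MeasurableSet.univ_pi fun i => measurableSet_Ico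

lemma volume_hbox {d : ℕ} (p q : Fin d → ℝ) :
    volume (hbox p q) = ∏ i, ENNReal.ofReal (q i - p i) := by
  rw [hbox_eq_pi, volume_pi_pi]
  simp [Real.volume_Ico]

lemma volume_hbox_lt_top {d : ℕ} (p q : Fin d → ℝ) : volume (hbox p q) < ⊤ := by
  rw [volume_hbox]
  exact ENNReal.prod_lt_top fun i _ => ENNReal.ofReal_lt_top

lemma toReal_volume_hbox {d : ℕ} {p q : Fin d → ℝ} (h : ∀ i, p i ≤ q i) :
    (volume (hbox p q)).toReal = ∏ i, (q i - p i) := by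
  rw [volume_hbox, ENNReal.toReal_prod]
  exact Finset.prod_congr rfl fun i _ => ENNReal.toReal_ofReal (by linarith [h i])

lemma hbox_add_hbox {d : ℕ} {p q p' q' : Fin d → ℝ} (h : ∀ i, p i < q i) (h' : ∀ i, p' i < q' i) :
    hbox p q + hbox p' q' = hbox (p + p') (q + q') := by
  apply Set.Subset.antisymm
  · rintro x ⟨u, hu, v, hv, rfl⟩ i
    have h1 := hu i; have h2 := hv i
    exact ⟨add_le_add h1.1 h2.1, add_lt_add h1.2 h2.2⟩
  · intro x hx
    have : ∀ i, ∃ uv : ℝ × ℝ, uv.1 ∈ Set.Ico (p i) (q i) ∧ uv.2 ∈ Set.Ico (p' i) (q' i) ∧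
        uv.1 + uv.2 = x i := by
      intro i
      have hxi : x i ∈ Set.Ico (p i + p' i) (q i + q' i) := hx i
      rw [← IcoAddIco (h i) (h' i)] at hxi
      obtain ⟨u, hu, v, hv, huv⟩ := hxi
      exact ⟨(u, v), hu, hv, huv⟩
    choose f hf1 hf2 hf3 using this
    exact ⟨fun i => (f i).1, fun i => hf1 i, fun i => (f i).2, fun i => hf2 i, by
      funext i; exact hf3 i⟩

lemma mahlerIneq {d : ℕ} (hd : 0 < d) (u v : Fin d → ℝ) (hu : ∀ i, 0 ≤ u i) (hv : ∀ i, 0 ≤ v i) :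
    (∏ i, u i) ^ (d:ℝ)⁻¹ + (∏ i, v i) ^ (d:ℝ)⁻¹ ≤ (∏ i, (u i + v i)) ^ (d:ℝ)⁻¹ := by
  set e : ℝ := (d:ℝ)⁻¹ with he
  have hepos : 0 < e := by positivity
  by_cases hP : ∃ i, u i + v i = 0
  · obtain ⟨i, hi⟩ := hP
    have hui : u i = 0 := le_antisymm (by linarith [hv i]) (hu i)
    have hvi : v i = 0 := le_antisymm (by linarith [hu i]) (hv i)
    have h1 : (∏ i, u i) = 0 := Finset.prod_eq_zero (Finset.mem_univ i) hui
    have h2 : (∏ i, v i) = 0 := Finset.prod_eq_zero (Finset.mem_univ i) hvi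
    have h3 : (∏ i, (u i + v i)) = 0 := Finset.prod_eq_zero (Finset.mem_univ i) hi
    rw [h1, h2, h3, Real.zero_rpow (ne_of_gt hepos)]
    norm_num
  · push_neg at hP
    have hPpos : ∀ i, 0 < u i + v i := fun i =>
      lt_of_le_of_ne (by linarith [hu i, hv i]) (Ne.symm (hP i))
    have hProd : 0 < ∏ i, (u i + v i) := Finset.prod_pos fun i _ => hPpos i
    have key : ∀ w : Fin d → ℝ, (∀ i, 0 ≤ w i) → (∀ i, w i ≤ u i + v i) →
        (∏ i, w i) ^ e ≤ (∏ i, (u i + v i)) ^ e * ((∑ i, w i / (u i + v i)) * e) := by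
      intro w hw hwle
      have := Real.geom_mean_le_arith_mean_weighted Finset.univ (fun _ => e)
        (fun i => w i / (u i + v i)) (fun i _ => le_of_lt hepos)
        (by simp [he, Finset.card_univ]; field_simp)
        (fun i _ => div_nonneg (hw i) (le_of_lt (hPpos i)))
      have hprw : ∏ i, (w i / (u i + v i)) ^ e = (∏ i, w i) ^ e / (∏ i, (u i + v i)) ^ e := by
        rw [← Real.div_rpow (Finset.prod_nonneg fun i _ => hw i)
              (le_of_lt hProd), ← Finset.prod_div_distrib,
            ← Real.finset_prod_rpow _ _ (fun i _ => div_nonneg (hw i) (le_of_lt (hPpos i))) e]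
      rw [hprw] at this
      have h2 : (∑ i, e * (w i / (u i + v i))) = (∑ i, w i / (u i + v i)) * e := by
        rw [Finset.sum_mul]; exact Finset.sum_congr rfl fun i _ => by ring
      rw [h2] at this
      calc (∏ i, w i) ^ e
          = ((∏ i, w i) ^ e / (∏ i, (u i + v i)) ^ e) * (∏ i, (u i + v i)) ^ e := by
            field_simp
        _ ≤ ((∑ i, w i / (u i + v i)) * e) * (∏ i, (u i + v i)) ^ e := by
            apply mul_le_mul_of_nonneg_right this (Real.rpow_nonneg (le_of_lt hProd) e)
        _ = (∏ i, (u i + v i)) ^ e * ((∑ i, w i / (u i + v i)) * e) := by ring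
    have hu' := key u hu (fun i => by linarith [hv i])
    have hv' := key v hv (fun i => by linarith [hu i])
    have hsum : (∑ i, u i / (u i + v i)) * e + (∑ i, v i / (u i + v i)) * e = 1 := by
      rw [← add_mul, ← Finset.sum_add_distrib]
      have : ∀ i ∈ Finset.univ, u i / (u i + v i) + v i / (u i + v i) = 1 := by
        intro i _; rw [← add_div, div_self (hP i)]
      rw [Finset.sum_congr rfl this]
      simp [he, Finset.card_univ]
      field_simp
    calc (∏ i, u i) ^ e + (∏ i, v i) ^ e
        ≤ (∏ i, (u i + v i)) ^ e * ((∑ i, u i / (u i + v i)) * e)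
          + (∏ i, (u i + v i)) ^ e * ((∑ i, v i / (u i + v i)) * e) := add_le_add hu' hv'
      _ = (∏ i, (u i + v i)) ^ e := by rw [← mul_add, hsum, mul_one]


section helpers
variable {d : ℕ}

abbrev BoxPair (d : ℕ) := ((Fin d → ℝ) × (Fin d → ℝ))

def ubox (s : Finset (BoxPair d)) : Set (Fin d → ℝ) := ⋃ pq ∈ s, hbox pq.1 pq.2


lemma measurableSet_ubox (s : Finset (BoxPair d)) : MeasurableSet (ubox s) :=
  MeasurableSet.biUnion s.countable_toSet fun pq _ => measurableSet_hbox pq.1 pq.2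

lemma volume_ubox_lt_top (s : Finset (BoxPair d)) : volume (ubox s) < ⊤ := by
  refine lt_of_le_of_lt (measure_biUnion_finset_le s _) ?_
  exact ENNReal.sum_lt_top.mpr fun pq _ => volume_hbox_lt_top pq.1 pq.2

lemma ubox_add_hbox (s : Finset (BoxPair d)) (p' q' : Fin d → ℝ)
    (hnd : ∀ pq ∈ s, ∀ i, pq.1 i < pq.2 i) (h' : ∀ i, p' i < q' i) :
    ubox s + hbox p' q' = ubox (s.image fun pq => (pq.1 + p', pq.2 + q')) := by
  have h1 : ubox s + hbox p' q' = ⋃ pq ∈ s, hbox (pq.1 + p') (pq.2 + q') := by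
    unfold ubox
    rw [Set.iUnion_add]
    refine Set.iUnion_congr fun pq => ?_
    rw [Set.iUnion_add]
    refine Set.iUnion_congr fun hpq => ?_
    exact hbox_add_hbox (hnd pq hpq) h'
  rw [h1]
  ext x
  simp only [ubox, Set.mem_iUnion, Finset.mem_image]
  constructor
  · rintro ⟨pq, hpq, hx⟩
    exact ⟨(pq.1 + p', pq.2 + q'), ⟨pq, hpq, rfl⟩, hx⟩
  · rintro ⟨r, ⟨pq, hpq, rfl⟩, hx⟩
    exact ⟨pq, hpq, hx⟩

lemma hbox_pos_volume {p q : Fin d → ℝ} (h : ∀ i, p i < q i) : 0 < volume (hbox p q) := by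
  rw [volume_hbox]
  refine (pos_iff_ne_zero).mpr ?_
  rw [Finset.prod_ne_zero_iff]
  intro i _
  simp only [ne_eq, ENNReal.ofReal_eq_zero, not_le]
  linarith [h i]

end helpers

section main
variable {d : ℕ}

lemma hbox_inter_lower (pq : BoxPair d) (ℓ : Fin d) (c : ℝ) :
    hbox pq.1 (Function.update pq.2 ℓ (min (pq.2 ℓ) c)) = hbox pq.1 pq.2 ∩ {x | x ℓ < c} := by
  ext x
  simp only [hbox, Set.mem_setOf_eq, Set.mem_inter_iff, Set.mem_Ico]
  constructor
  · intro h
    have hℓ := (h ℓ).2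
    rw [Function.update_self, lt_min_iff] at hℓ
    refine ⟨fun i => ?_, hℓ.2⟩
    rcases eq_or_ne i ℓ with rfl | hne
    · exact ⟨(h i).1, hℓ.1⟩
    · have := (h i).2; rw [Function.update_of_ne hne] at this
      exact ⟨(h i).1, this⟩
  · rintro ⟨h1, h2⟩ i
    rcases eq_or_ne i ℓ with rfl | hne
    · rw [Function.update_self, lt_min_iff]
      exact ⟨(h1 i).1, (h1 i).2, h2⟩
    · rw [Function.update_of_ne hne]; exact h1 i

lemma hbox_inter_upper (pq : BoxPair d) (ℓ : Fin d) (c : ℝ) :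
    hbox (Function.update pq.1 ℓ (max (pq.1 ℓ) c)) pq.2 = hbox pq.1 pq.2 ∩ {x | c ≤ x ℓ} := by
  ext x
  simp only [hbox, Set.mem_setOf_eq, Set.mem_inter_iff, Set.mem_Ico]
  constructor
  · intro h
    have hℓ := (h ℓ).1
    rw [Function.update_self, max_le_iff] at hℓ
    refine ⟨fun i => ?_, hℓ.2⟩
    rcases eq_or_ne i ℓ with rfl | hne
    · exact ⟨hℓ.1, (h i).2⟩
    · have := (h i).1; rw [Function.update_of_ne hne] at this
      exact ⟨this, (h i).2⟩
  · rintro ⟨h1, h2⟩ i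
    rcases eq_or_ne i ℓ with rfl | hne
    · rw [Function.update_self, max_le_iff]
      exact ⟨⟨(h1 i).1, h2⟩, (h1 i).2⟩
    · rw [Function.update_of_ne hne]; exact h1 i

theorem boxUnionBM (hd : 0 < d) :
    ∀ n : ℕ, ∀ s : Finset (BoxPair d), s.card ≤ n → s.Nonempty →
    (∀ pq ∈ s, ∀ i, pq.1 i < pq.2 i) →
    ((s : Set (BoxPair d)).Pairwise fun pq pq' => Disjoint (hbox pq.1 pq.2) (hbox pq'.1 pq'.2)) →
    ∀ p' q' : Fin d → ℝ, (∀ i, p' i < q' i) →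
    ((volume (ubox s)).toReal ^ (d:ℝ)⁻¹ + (volume (hbox p' q')).toReal ^ (d:ℝ)⁻¹) ^ d
      ≤ (volume (ubox s + hbox p' q')).toReal := by
  intro n
  induction n with
  | zero =>
    intro s hcard hne
    exact absurd (Finset.card_pos.mpr hne) (by omega)
  | succ n IH =>
    intro s hcard hne hnd hdisj p' q' h'
    rcases le_or_gt s.card n with hle | hgt
    · exact IH s hle hne hnd hdisj p' q' h'
    have hc : s.card = n + 1 := by omega
    rcases eq_or_lt_of_le (Finset.one_le_card.mpr hne) with h1 | h1
    · -- base case: single box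
      obtain ⟨pq, rfl⟩ := Finset.card_eq_one.mp h1.symm
      have hA : ubox {pq} = hbox pq.1 pq.2 := by simp [ubox]
      have hnd1 : ∀ i, pq.1 i < pq.2 i := hnd pq (Finset.mem_singleton_self pq)
      rw [hA, hbox_add_hbox hnd1 h']
      rw [toReal_volume_hbox (fun i => le_of_lt (hnd1 i)),
          toReal_volume_hbox (fun i => le_of_lt (h' i)),
          toReal_volume_hbox (fun i => by have := hnd1 i; have := h' i
                                          simp only [Pi.add_apply]; linarith)]
      have hmah := mahlerIneq hd (fun i => pq.2 i - pq.1 i) (fun i => q' i - p' i)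
        (fun i => sub_nonneg.mpr (le_of_lt (hnd1 i))) (fun i => sub_nonneg.mpr (le_of_lt (h' i)))
      have hrw : (fun i => (pq.2 i - pq.1 i) + (q' i - p' i)) =
          (fun i => (pq.2 + q') i - (pq.1 + p') i) := by funext i; simp; ring
      rw [hrw] at hmah
      calc ((∏ i, (pq.2 i - pq.1 i)) ^ (d:ℝ)⁻¹ + (∏ i, (q' i - p' i)) ^ (d:ℝ)⁻¹) ^ d
          ≤ ((∏ i, ((pq.2 + q') i - (pq.1 + p') i)) ^ (d:ℝ)⁻¹) ^ d := by
            refine pow_le_pow_left₀ (add_nonneg ?_ ?_) hmah d <;>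
              exact Real.rpow_nonneg (Finset.prod_nonneg fun i _ =>
                sub_nonneg.mpr (le_of_lt (by first | exact hnd1 i | exact h' i))) _
        _ = ∏ i, ((pq.2 + q') i - (pq.1 + p') i) := by
            refine Real.rpow_inv_natCast_pow (Finset.prod_nonneg fun i _ => ?_) (by omega)
            have := hnd1 i; have := h' i
            simp only [Pi.add_apply]; linarith
    · -- at least two boxes: split
      obtain ⟨a, ha, b, hb, hab⟩ := Finset.one_lt_card.mp h1
      have hsep : ∃ ℓ : Fin d, a.2 ℓ ≤ b.1 ℓ ∨ b.2 ℓ ≤ a.1 ℓ := by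
        by_contra hcon
        push_neg at hcon
        have hx : (fun i => max (a.1 i) (b.1 i)) ∈ hbox a.1 a.2 ∩ hbox b.1 b.2 := by
          constructor
          · intro i
            exact ⟨le_max_left _ _, max_lt (hnd a ha i) (hcon i).1⟩
          · intro i
            exact ⟨le_max_right _ _, max_lt (hcon i).2 (hnd b hb i)⟩
        exact Set.disjoint_left.mp (hdisj ha hb hab) hx.1 hx.2
      have key : ∀ ℓ : Fin d, ∀ a b : BoxPair d, a ∈ s → b ∈ s → a ≠ b → a.2 ℓ ≤ b.1 ℓ →
          ((volume (ubox s)).toReal ^ (d:ℝ)⁻¹ + (volume (hbox p' q')).toReal ^ (d:ℝ)⁻¹) ^ d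
            ≤ (volume (ubox s + hbox p' q')).toReal := by
        intro ℓ a b ha hb hab hsep
        set e : ℝ := (d:ℝ)⁻¹ with he
        set c : ℝ := b.1 ℓ with hcdef
        set tLow := s.filter (fun pq => pq.1 ℓ < c) with htLow
        set tHigh := s.filter (fun pq => c < pq.2 ℓ) with htHigh
        set sLow := tLow.image (fun pq => (pq.1, Function.update pq.2 ℓ (min (pq.2 ℓ) c))) with hsLow
        set sHigh := tHigh.image (fun pq => (Function.update pq.1 ℓ (max (pq.1 ℓ) c), pq.2)) with hsHigh
        have haLow : a ∈ tLow := Finset.mem_filter.mpr ⟨ha, lt_of_lt_of_le (hnd a ha ℓ) hsep⟩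
        have hbHigh : b ∈ tHigh := Finset.mem_filter.mpr ⟨hb, hnd b hb ℓ⟩
        have hcLow : sLow.card ≤ n := by
          have hbnot : b ∉ tLow := fun hmem => absurd (Finset.mem_filter.mp hmem).2 (lt_irrefl c)
          have h1 : tLow ⊂ s := (Finset.ssubset_iff_of_subset (Finset.filter_subset _ _)).mpr
            ⟨b, hb, hbnot⟩
          have := Finset.card_lt_card h1
          calc sLow.card ≤ tLow.card := Finset.card_image_le
            _ ≤ n := by omega
        have hcHigh : sHigh.card ≤ n := by
          have hanot : a ∉ tHigh := fun hmem =>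
            absurd (Finset.mem_filter.mp hmem).2 (not_lt.mpr hsep)
          have h1 : tHigh ⊂ s := (Finset.ssubset_iff_of_subset (Finset.filter_subset _ _)).mpr
            ⟨a, ha, hanot⟩
          have := Finset.card_lt_card h1
          calc sHigh.card ≤ tHigh.card := Finset.card_image_le
            _ ≤ n := by omega
        have hneLow : sLow.Nonempty := ⟨_, Finset.mem_image_of_mem _ haLow⟩
        have hneHigh : sHigh.Nonempty := ⟨_, Finset.mem_image_of_mem _ hbHigh⟩
        have hndLow : ∀ pq ∈ sLow, ∀ i, pq.1 i < pq.2 i := by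
          intro pq hpq i
          obtain ⟨r, hr, rfl⟩ := Finset.mem_image.mp hpq
          obtain ⟨hrs, hrc⟩ := Finset.mem_filter.mp hr
          rcases eq_or_ne i ℓ with rfl | hne
          · show r.1 i < Function.update r.2 i (min (r.2 i) c) i
            rw [Function.update_self]
            exact lt_min (hnd r hrs i) hrc
          · show r.1 i < Function.update r.2 ℓ (min (r.2 ℓ) c) i
            rw [Function.update_of_ne hne]
            exact hnd r hrs i
        have hndHigh : ∀ pq ∈ sHigh, ∀ i, pq.1 i < pq.2 i := by
          intro pq hpq i
          obtain ⟨r, hr, rfl⟩ := Finset.mem_image.mp hpq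
          obtain ⟨hrs, hrc⟩ := Finset.mem_filter.mp hr
          rcases eq_or_ne i ℓ with rfl | hne
          · show Function.update r.1 i (max (r.1 i) c) i < r.2 i
            rw [Function.update_self]
            exact max_lt (hnd r hrs i) hrc
          · show Function.update r.1 ℓ (max (r.1 ℓ) c) i < r.2 i
            rw [Function.update_of_ne hne]
            exact hnd r hrs i
        have hALow : ubox sLow = ubox s ∩ {x | x ℓ < c} := by
          apply Set.Subset.antisymm
          · intro x hx
            simp only [ubox, Set.mem_iUnion] at hx
            obtain ⟨pq, hpq, hx⟩ := hx
            obtain ⟨r, hr, rfl⟩ := Finset.mem_image.mp hpq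
            obtain ⟨hrs, _⟩ := Finset.mem_filter.mp hr
            have hx' : x ∈ hbox r.1 r.2 ∩ {x | x ℓ < c} := by
              rw [← hbox_inter_lower r ℓ c]; exact hx
            exact ⟨Set.mem_biUnion hrs hx'.1, hx'.2⟩
          · rintro x ⟨hxA, hxc⟩
            simp only [ubox, Set.mem_iUnion] at hxA ⊢
            obtain ⟨pq, hpq, hx⟩ := hxA
            have hmem : pq ∈ tLow := Finset.mem_filter.mpr
              ⟨hpq, lt_of_le_of_lt (hx ℓ).1 hxc⟩
            refine ⟨_, Finset.mem_image_of_mem _ hmem, ?_⟩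
            rw [hbox_inter_lower pq ℓ c]
            exact ⟨hx, hxc⟩
        have hAHigh : ubox sHigh = ubox s ∩ {x | c ≤ x ℓ} := by
          apply Set.Subset.antisymm
          · intro x hx
            simp only [ubox, Set.mem_iUnion] at hx
            obtain ⟨pq, hpq, hx⟩ := hx
            obtain ⟨r, hr, rfl⟩ := Finset.mem_image.mp hpq
            obtain ⟨hrs, _⟩ := Finset.mem_filter.mp hr
            have hx' : x ∈ hbox r.1 r.2 ∩ {x | c ≤ x ℓ} := by
              rw [← hbox_inter_upper r ℓ c]; exact hx
            exact ⟨Set.mem_biUnion hrs hx'.1, hx'.2⟩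
          · rintro x ⟨hxA, hxc⟩
            simp only [ubox, Set.mem_iUnion] at hxA ⊢
            obtain ⟨pq, hpq, hx⟩ := hxA
            have hmem : pq ∈ tHigh := Finset.mem_filter.mpr
              ⟨hpq, lt_of_le_of_lt hxc (hx ℓ).2⟩
            refine ⟨_, Finset.mem_image_of_mem _ hmem, ?_⟩
            rw [hbox_inter_upper pq ℓ c]
            exact ⟨hx, hxc⟩
        have hdisjLow : ((sLow : Set (BoxPair d)).Pairwise
            fun pq pq' => Disjoint (hbox pq.1 pq.2) (hbox pq'.1 pq'.2)) := by
          intro r1 hr1 r2 hr2 hne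
          rw [Finset.mem_coe] at hr1 hr2
          obtain ⟨u, hu, rfl⟩ := Finset.mem_image.mp hr1
          obtain ⟨v, hv, rfl⟩ := Finset.mem_image.mp hr2
          have huv : u ≠ v := fun h => hne (by rw [h])
          have hd' := hdisj (Finset.mem_coe.mpr (Finset.filter_subset _ _ hu))
            (Finset.mem_coe.mpr (Finset.filter_subset _ _ hv)) huv
          rw [hbox_inter_lower u ℓ c, hbox_inter_lower v ℓ c]
          exact hd'.mono Set.inter_subset_left Set.inter_subset_left
        have hdisjHigh : ((sHigh : Set (BoxPair d)).Pairwise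
            fun pq pq' => Disjoint (hbox pq.1 pq.2) (hbox pq'.1 pq'.2)) := by
          intro r1 hr1 r2 hr2 hne
          rw [Finset.mem_coe] at hr1 hr2
          obtain ⟨u, hu, rfl⟩ := Finset.mem_image.mp hr1
          obtain ⟨v, hv, rfl⟩ := Finset.mem_image.mp hr2
          have huv : u ≠ v := fun h => hne (by rw [h])
          have hd' := hdisj (Finset.mem_coe.mpr (Finset.filter_subset _ _ hu))
            (Finset.mem_coe.mpr (Finset.filter_subset _ _ hv)) huv
          rw [hbox_inter_upper u ℓ c, hbox_inter_upper v ℓ c]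
          exact hd'.mono Set.inter_subset_left Set.inter_subset_left
        -- volume bookkeeping
        have hhalf : MeasurableSet {x : Fin d → ℝ | x ℓ < c} :=
          measurableSet_lt (measurable_pi_apply ℓ) measurable_const
        have hsplit : volume (ubox s) = volume (ubox sLow) + volume (ubox sHigh) := by
          rw [hALow, hAHigh]
          have hcompl : ubox s ∩ {x | c ≤ x ℓ} = ubox s \ {x | x ℓ < c} := by
            ext x; simp [not_lt]
          rw [hcompl]
          exact (measure_inter_add_diff _ hhalf).symm
        set vA := (volume (ubox s)).toReal with hvA
        set vB := (volume (hbox p' q')).toReal with hvB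
        set vAL := (volume (ubox sLow)).toReal with hvAL
        set vAH := (volume (ubox sHigh)).toReal with hvAH
        have hfinA : volume (ubox s) ≠ ⊤ := (volume_ubox_lt_top s).ne
        have hfinL : volume (ubox sLow) ≠ ⊤ := (volume_ubox_lt_top sLow).ne
        have hfinH : volume (ubox sHigh) ≠ ⊤ := (volume_ubox_lt_top sHigh).ne
        have hvAsum : vA = vAL + vAH := by
          rw [hvA, hsplit, ENNReal.toReal_add hfinL hfinH]
        have hvALpos : 0 < vAL := by
          have hsub : hbox a.1 a.2 ⊆ ubox sLow := by
            rw [hALow]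
            intro x hx
            exact ⟨Set.mem_biUnion ha hx, lt_of_lt_of_le (hx ℓ).2 hsep⟩
          exact ENNReal.toReal_pos
            (ne_of_gt (lt_of_lt_of_le (hbox_pos_volume (hnd a ha)) (measure_mono hsub))) hfinL
        have hvAHpos : 0 < vAH := by
          have hsub : hbox b.1 b.2 ⊆ ubox sHigh := by
            rw [hAHigh]
            intro x hx
            exact ⟨Set.mem_biUnion hb hx, (hx ℓ).1⟩
          exact ENNReal.toReal_pos
            (ne_of_gt (lt_of_lt_of_le (hbox_pos_volume (hnd b hb)) (measure_mono hsub))) hfinH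
        have hvApos : 0 < vA := by rw [hvAsum]; linarith
        set θ : ℝ := vAL / vA with hθ
        have hθpos : 0 < θ := div_pos hvALpos hvApos
        have hθlt1 : θ < 1 := (div_lt_one hvApos).mpr (by linarith)
        have hθvA : vAL = θ * vA := by rw [hθ, div_mul_cancel₀ _ (ne_of_gt hvApos)]
        have hθvAH : vAH = (1 - θ) * vA := by
          have : vAH = vA - vAL := by linarith
          rw [this, hθvA]; ring
        -- split B
        set c' : ℝ := p' ℓ + θ * (q' ℓ - p' ℓ) with hc'
        have hc'1 : p' ℓ < c' := by
          have : 0 < θ * (q' ℓ - p' ℓ) := mul_pos hθpos (by linarith [h' ℓ])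
          linarith
        have hc'2 : c' < q' ℓ := by
          have h0 : θ * (q' ℓ - p' ℓ) < 1 * (q' ℓ - p' ℓ) :=
            mul_lt_mul_of_pos_right hθlt1 (by linarith [h' ℓ])
          rw [hc']; linarith
        set q'L := Function.update q' ℓ c' with hq'L
        set p'H := Function.update p' ℓ c' with hp'H
        have h'L : ∀ i, p' i < q'L i := by
          intro i
          rcases eq_or_ne i ℓ with rfl | hne
          · rw [hq'L, Function.update_self]; exact hc'1
          · rw [hq'L, Function.update_of_ne hne]; exact h' i
        have h'H : ∀ i, p'H i < q' i := by
          intro i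
          rcases eq_or_ne i ℓ with rfl | hne
          · rw [hp'H, Function.update_self]; exact hc'2
          · rw [hp'H, Function.update_of_ne hne]; exact h' i
        have hvBval : vB = ∏ i, (q' i - p' i) := toReal_volume_hbox fun i => le_of_lt (h' i)
        have hvBL : (volume (hbox p' q'L)).toReal = θ * vB := by
          rw [toReal_volume_hbox fun i => le_of_lt (h'L i)]
          have hfun : ∀ i, q'L i - p' i =
              Function.update (fun j => q' j - p' j) ℓ (θ * (q' ℓ - p' ℓ)) i := by
            intro i
            rcases eq_or_ne i ℓ with rfl | hne
            · rw [hq'L, Function.update_self, Function.update_self, hc']; ring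
            · rw [hq'L, Function.update_of_ne hne, Function.update_of_ne hne]
          calc ∏ i, (q'L i - p' i)
              = ∏ i, Function.update (fun j => q' j - p' j) ℓ (θ * (q' ℓ - p' ℓ)) i :=
                Finset.prod_congr rfl fun i _ => hfun i
            _ = (θ * (q' ℓ - p' ℓ)) * ∏ i ∈ Finset.univ \ {ℓ}, (q' i - p' i) :=
                Finset.prod_update_of_mem (Finset.mem_univ ℓ) _ _
            _ = θ * vB := by
                rw [hvBval, Finset.prod_eq_mul_prod_sdiff_singleton_of_mem (Finset.mem_univ ℓ)
                  (fun i => q' i - p' i)]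
                ring
        have hvBH : (volume (hbox p'H q')).toReal = (1 - θ) * vB := by
          rw [toReal_volume_hbox fun i => le_of_lt (h'H i)]
          have hfun : ∀ i, q' i - p'H i =
              Function.update (fun j => q' j - p' j) ℓ ((1 - θ) * (q' ℓ - p' ℓ)) i := by
            intro i
            rcases eq_or_ne i ℓ with rfl | hne
            · rw [hp'H, Function.update_self, Function.update_self, hc']; ring
            · rw [hp'H, Function.update_of_ne hne, Function.update_of_ne hne]
          calc ∏ i, (q' i - p'H i)
              = ∏ i, Function.update (fun j => q' j - p' j) ℓ ((1 - θ) * (q' ℓ - p' ℓ)) i :=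
                Finset.prod_congr rfl fun i _ => hfun i
            _ = ((1 - θ) * (q' ℓ - p' ℓ)) * ∏ i ∈ Finset.univ \ {ℓ}, (q' i - p' i) :=
                Finset.prod_update_of_mem (Finset.mem_univ ℓ) _ _
            _ = (1 - θ) * vB := by
                rw [hvBval, Finset.prod_eq_mul_prod_sdiff_singleton_of_mem (Finset.mem_univ ℓ)
                  (fun i => q' i - p' i)]
                ring
        -- superadditivity
        set S1 := ubox sLow + hbox p' q'L with hS1
        set S2 := ubox sHigh + hbox p'H q' with hS2
        have hS1eq := ubox_add_hbox sLow p' q'L hndLow h'L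
        have hS2eq := ubox_add_hbox sHigh p'H q' hndHigh h'H
        have hS1m : MeasurableSet S1 := by rw [hS1, hS1eq]; exact measurableSet_ubox _
        have hS2m : MeasurableSet S2 := by rw [hS2, hS2eq]; exact measurableSet_ubox _
        have hfinS1 : volume S1 ≠ ⊤ := by rw [hS1, hS1eq]; exact (volume_ubox_lt_top _).ne
        have hfinS2 : volume S2 ≠ ⊤ := by rw [hS2, hS2eq]; exact (volume_ubox_lt_top _).ne
        have hsub1 : S1 ⊆ ubox s + hbox p' q' := by
          apply Set.add_subset_add
          · rw [hALow]; exact Set.inter_subset_left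
          · intro x hx i
            have h1 := (hx i).1
            have h2 := (hx i).2
            rcases eq_or_ne i ℓ with rfl | hne
            · rw [hq'L, Function.update_self] at h2
              exact ⟨h1, lt_trans h2 hc'2⟩
            · rw [hq'L, Function.update_of_ne hne] at h2
              exact ⟨h1, h2⟩
        have hsub2 : S2 ⊆ ubox s + hbox p' q' := by
          apply Set.add_subset_add
          · rw [hAHigh]; exact Set.inter_subset_left
          · intro x hx i
            have h1 := (hx i).1
            have h2 := (hx i).2
            rcases eq_or_ne i ℓ with rfl | hne
            · rw [hp'H, Function.update_self] at h1
              exact ⟨le_of_lt (lt_of_lt_of_le hc'1 h1), h2⟩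
            · rw [hp'H, Function.update_of_ne hne] at h1
              exact ⟨h1, h2⟩
        have hdisj12 : Disjoint S1 S2 := by
          rw [Set.disjoint_left]
          rintro x ⟨u, hu, v, hv, rfl⟩ ⟨u', hu', v', hv', hx⟩
          have h1 : u ℓ < c := (hALow ▸ hu).2
          have h2 : v ℓ < c' := by
            have := (hv ℓ).2
            rwa [hq'L, Function.update_self] at this
          have h3 : c ≤ u' ℓ := (hAHigh ▸ hu').2
          have h4 : c' ≤ v' ℓ := by
            have := (hv' ℓ).1
            rwa [hp'H, Function.update_self] at this
          have := congrFun hx ℓ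
          simp only [Pi.add_apply] at this
          linarith
        have hvolsum : volume S1 + volume S2 ≤ volume (ubox s + hbox p' q') := by
          rw [← measure_union hdisj12 hS2m]
          exact measure_mono (Set.union_subset hsub1 hsub2)
        -- apply induction hypothesis
        have ih1 := IH sLow hcLow hneLow hndLow hdisjLow p' q'L h'L
        have ih2 := IH sHigh hcHigh hneHigh hndHigh hdisjHigh p'H q' h'H
        rw [← hvAL, hθvA, hvBL] at ih1
        rw [← hvAH, hθvAH, hvBH] at ih2
        -- algebra
        have hvAnn : 0 ≤ vA := le_of_lt hvApos
        have hvBnn : 0 ≤ vB := ENNReal.toReal_nonneg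
        have hθnn : 0 ≤ θ := le_of_lt hθpos
        have h1θnn : 0 ≤ 1 - θ := by linarith
        have hdne : d ≠ 0 := by omega
        have keyfact : ∀ t : ℝ, 0 ≤ t →
            ((t * vA) ^ e + (t * vB) ^ e) ^ d = t * (vA ^ e + vB ^ e) ^ d := by
          intro t ht
          rw [Real.mul_rpow ht hvAnn, Real.mul_rpow ht hvBnn, ← mul_add, mul_pow,
            Real.rpow_inv_natCast_pow ht hdne]
        rw [keyfact θ hθnn] at ih1
        rw [keyfact (1 - θ) h1θnn] at ih2
        calc (vA ^ e + vB ^ e) ^ d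
            = θ * (vA ^ e + vB ^ e) ^ d + (1 - θ) * (vA ^ e + vB ^ e) ^ d := by ring
          _ ≤ (volume S1).toReal + (volume S2).toReal := add_le_add ih1 ih2
          _ = (volume S1 + volume S2).toReal := (ENNReal.toReal_add hfinS1 hfinS2).symm
          _ ≤ (volume (ubox s + hbox p' q')).toReal := by
              apply ENNReal.toReal_mono ?_ hvolsum
              rw [ubox_add_hbox s p' q' hnd h']
              exact (volume_ubox_lt_top _).ne
      obtain ⟨ℓ, hsep | hsep⟩ := hsep
      · exact key ℓ a b ha hb hab hsep
      · exact key ℓ b a hb ha (Ne.symm hab) hsep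

end main


section infl
variable {d : ℕ}



/-- the ε-cell with integer corner z -/
def cell (ε : ℝ) (z : Fin d → ℤ) : Set (Fin d → ℝ) :=
  hbox (fun i => ε * z i) (fun i => ε * z i + ε)

lemma mem_cell_floor {ε : ℝ} (hε : 0 < ε) (x : Fin d → ℝ) :
    x ∈ cell ε (fun i => ⌊x i / ε⌋) := by
  intro i
  simp only [Set.mem_Ico]
  have h1 : ε * (⌊x i / ε⌋ : ℝ) ≤ ε * (x i / ε) :=
    mul_le_mul_of_nonneg_left (Int.floor_le _) (le_of_lt hε)
  have h2 : x i / ε < ⌊x i / ε⌋ + 1 := Int.lt_floor_add_one _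
  have h3 : ε * (x i / ε) < ε * ((⌊x i / ε⌋ : ℝ) + 1) := mul_lt_mul_of_pos_left h2 hε
  have h4 : ε * (x i / ε) = x i := by field_simp
  constructor
  · linarith
  · nlinarith

lemma cell_disjoint {ε : ℝ} (hε : 0 < ε) {z z' : Fin d → ℤ} (h : z ≠ z') :
    Disjoint (cell ε z) (cell ε z') := by
  rw [Set.disjoint_left]
  intro x hx hx'
  obtain ⟨i, hi⟩ := Function.ne_iff.mp h
  rcases lt_or_gt_of_ne hi with hlt | hlt
  · have h1 : x i < ε * z i + ε := (hx i).2
    have h2 : ε * z' i ≤ x i := (hx' i).1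
    have h3 : ε * z i + ε ≤ ε * z' i := by
      have : (z i : ℝ) + 1 ≤ z' i := by exact_mod_cast hlt
      nlinarith
    linarith
  · have h1 : x i < ε * z' i + ε := (hx' i).2
    have h2 : ε * z i ≤ x i := (hx i).1
    have h3 : ε * z' i + ε ≤ ε * z i := by
      have : (z' i : ℝ) + 1 ≤ z i := by exact_mod_cast hlt
      nlinarith
    linarith

/-- Brunn-Minkowski style inflation bound for measurable bounded sets of volume ≤ 1. -/
theorem inflation (hd : 0 < d) (A : Set (Fin d → ℝ)) (hAm : MeasurableSet A)
    (hAb : Bornology.IsBounded A) (hA1 : volume A ≤ 1) (ε b : ℝ) (hε : 0 < ε) (hb : 0 < b) :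
    ∃ S : Set (Fin d → ℝ), MeasurableSet S ∧ volume S ≠ ⊤ ∧
      (∀ x ∈ S, ∃ u : Fin d → ℝ, ∃ a ∈ A, (∀ k, |u k - a k| < ε) ∧
        (∀ k, 0 ≤ x k - u k ∧ x k - u k < b)) ∧
      ENNReal.ofReal ((1+b)^d) * volume A ≤ volume S := by
  classical
  -- the set of cells meeting A
  obtain ⟨R, hR⟩ := hAb.subset_closedBall 0
  set Z : Set (Fin d → ℤ) := {z | (cell ε z ∩ A).Nonempty} with hZ
  have hZfin : Z.Finite := by
    have hsub : Z ⊆ Set.Icc (fun _ => -(⌈(R + ε)/ε⌉ + 1)) (fun _ => ⌈(R + ε)/ε⌉ + 1) := by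
      rintro z ⟨x, hx1, hx2⟩
      have hxR : ∀ i, |x i| ≤ R := by
        intro i
        have := hR hx2
        simp only [Metric.mem_closedBall] at this
        calc |x i| = dist (x i) ((0 : Fin d → ℝ) i) := by simp [Real.dist_eq]
          _ ≤ dist x 0 := dist_le_pi_dist x 0 i
          _ ≤ R := this
      have hbig : ∀ i, |(z i : ℝ)| ≤ (R + ε)/ε := by
        intro i
        have h1 : ε * z i ≤ x i := (hx1 i).1
        have h2 : x i < ε * z i + ε := (hx1 i).2
        have habs := abs_le.mp (hxR i)
        have hub : (z i : ℝ) ≤ (R + ε)/ε := by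
          rw [le_div_iff₀ hε]
          nlinarith
        have hlb : -((R + ε)/ε) ≤ (z i : ℝ) := by
          rw [neg_le, le_div_iff₀ hε]
          nlinarith
        exact abs_le.mpr ⟨hlb, hub⟩
      constructor <;> intro i <;> simp only
      · have := (abs_le.mp (hbig i)).1
        have hce : (R + ε)/ε ≤ (⌈(R + ε)/ε⌉ : ℝ) := Int.le_ceil _
        have : -((⌈(R + ε)/ε⌉ : ℝ) + 1) ≤ (z i : ℝ) := by linarith
        exact_mod_cast this
      · have := (abs_le.mp (hbig i)).2
        have hce : (R + ε)/ε ≤ (⌈(R + ε)/ε⌉ : ℝ) := Int.le_ceil _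
        have : (z i : ℝ) ≤ (⌈(R + ε)/ε⌉ : ℝ) + 1 := by linarith
        exact_mod_cast this
    exact (Set.finite_Icc _ _).subset hsub
  -- corner pairs finset
  set toPair : (Fin d → ℤ) → BoxPair d :=
    fun z => (fun i => ε * z i, fun i => ε * z i + ε) with htoPair
  have htoPairInj : Function.Injective toPair := by
    intro z z' h
    funext i
    have h2 : ε * (z i : ℝ) = ε * (z' i : ℝ) := congrFun (congrArg Prod.fst h) i
    have h3 : (z i : ℝ) = z' i := mul_left_cancel₀ (ne_of_gt hε) h2
    exact_mod_cast h3
  set s : Finset (BoxPair d) := (hZfin.toFinset).image toPair with hs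
  have hD : ubox s = ⋃ z ∈ hZfin.toFinset, cell ε z := by
    unfold ubox
    ext x
    simp only [Set.mem_iUnion, Finset.mem_image, hs]
    constructor
    · rintro ⟨pq, ⟨z, hz, rfl⟩, hx⟩
      exact ⟨z, hz, hx⟩
    · rintro ⟨z, hz, hx⟩
      exact ⟨toPair z, ⟨z, hz, rfl⟩, hx⟩
  have hAD : A ⊆ ubox s := by
    intro x hx
    rw [hD]
    exact Set.mem_biUnion (hZfin.mem_toFinset.mpr ⟨x, ⟨mem_cell_floor hε x, hx⟩⟩)
      (mem_cell_floor hε x)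
  -- the inflation
  set B := hbox (fun _ : Fin d => (0:ℝ)) (fun _ => b) with hB
  set S := ubox s + B with hSdef
  have hndS : ∀ pq ∈ s, ∀ i, pq.1 i < pq.2 i := by
    rintro pq hpq i
    obtain ⟨z, hz, rfl⟩ := Finset.mem_image.mp hpq
    simp only [htoPair]
    linarith
  have hndB : ∀ i : Fin d, (fun _ : Fin d => (0:ℝ)) i < (fun _ : Fin d => b) i := fun i => hb
  have hSeq := ubox_add_hbox s (fun _ : Fin d => (0:ℝ)) (fun _ => b) hndS hndB
  refine ⟨S, ?_, ?_, ?_, ?_⟩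
  · rw [hSdef, hB, hSeq]; exact measurableSet_ubox _
  · rw [hSdef, hB, hSeq]; exact (volume_ubox_lt_top _).ne
  · rintro x ⟨u, hu, v, hv, rfl⟩
    rw [hD] at hu
    simp only [Set.mem_iUnion] at hu
    obtain ⟨z, hz, hu⟩ := hu
    obtain ⟨a, hac, haA⟩ := hZfin.mem_toFinset.mp hz
    refine ⟨u, a, haA, fun k => ?_, fun k => ?_⟩
    · have h1 : ε * z k ≤ u k := (hu k).1
      have h2 : u k < ε * z k + ε := (hu k).2
      have h3 : ε * z k ≤ a k := (hac k).1
      have h4 : a k < ε * z k + ε := (hac k).2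
      rw [abs_sub_lt_iff]
      constructor <;> linarith
    · have h1 : (0:ℝ) ≤ v k := (hv k).1
      have h2 : v k < b := (hv k).2
      constructor <;> simp only [Pi.add_apply] <;> linarith
  · rcases Finset.eq_empty_or_nonempty s with hse | hsne
    · have hAe : A = ∅ := by
        have : ubox s = ∅ := by simp [ubox, hse]
        rw [this] at hAD
        exact Set.subset_empty_iff.mp hAD
      simp [hAe]
    · have hdisjs : ((s : Set (BoxPair d)).Pairwise
          fun pq pq' => Disjoint (hbox pq.1 pq.2) (hbox pq'.1 pq'.2)) := by
        intro r1 hr1 r2 hr2 hne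
        rw [Finset.mem_coe] at hr1 hr2
        obtain ⟨z, hz, rfl⟩ := Finset.mem_image.mp hr1
        obtain ⟨z', hz', rfl⟩ := Finset.mem_image.mp hr2
        have hzz : z ≠ z' := fun hzz => hne (by rw [hzz])
        exact cell_disjoint hε hzz
      have hbm := boxUnionBM hd s.card s le_rfl hsne hndS hdisjs
        (fun _ : Fin d => (0:ℝ)) (fun _ => b) hndB
      set e : ℝ := (d:ℝ)⁻¹ with he
      have hdne : d ≠ 0 := by omega
      set vD := (volume (ubox s)).toReal with hvD
      set vA := (volume A).toReal with hvA
      have hvB : (volume (hbox (fun _ : Fin d => (0:ℝ)) (fun _ => b))).toReal = b ^ d := by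
        rw [toReal_volume_hbox fun i => le_of_lt hb]
        simp [Finset.prod_const, Finset.card_univ]
      have hvAnn : 0 ≤ vA := ENNReal.toReal_nonneg
      have hvDnn : 0 ≤ vD := ENNReal.toReal_nonneg
      have hAfin : volume A ≠ ⊤ := by
        exact ne_top_of_le_ne_top (by norm_num) hA1
      have hvAD : vA ≤ vD :=
        ENNReal.toReal_mono (volume_ubox_lt_top s).ne (measure_mono hAD)
      have hvA1 : vA ≤ 1 := by
        have := ENNReal.toReal_mono ENNReal.one_ne_top hA1
        simpa using this
      have hreal : (1+b)^d * vA ≤ (volume S).toReal := by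
        have h1 : (vA ^ e + b) ^ d ≤ (vD ^ e + (b^d) ^ e) ^ d := by
          have hbe : (b^d) ^ e = b := Real.pow_rpow_inv_natCast (le_of_lt hb) hdne
          rw [hbe]
          exact pow_le_pow_left₀ (by positivity)
            (add_le_add_left (Real.rpow_le_rpow hvAnn hvAD (by positivity)) b) d
        have h2 : ((1+b) * vA ^ e) ^ d ≤ (vA ^ e + b) ^ d := by
          apply pow_le_pow_left₀ (by positivity)
          have ht1 : vA ^ e ≤ 1 := Real.rpow_le_one hvAnn hvA1 (by positivity)
          nlinarith [Real.rpow_nonneg hvAnn e]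
        have h3 : ((1+b) * vA ^ e) ^ d = (1+b)^d * vA := by
          rw [mul_pow, Real.rpow_inv_natCast_pow hvAnn hdne]
        rw [← h3]
        rw [hvB] at hbm
        exact le_trans h2 (le_trans h1 hbm)
      have hSfin : volume S ≠ ⊤ := by rw [hSdef, hB, hSeq]; exact (volume_ubox_lt_top _).ne
      calc ENNReal.ofReal ((1+b)^d) * volume A
          = ENNReal.ofReal ((1+b)^d) * ENNReal.ofReal vA := by
            rw [hvA, ENNReal.ofReal_toReal hAfin]
        _ = ENNReal.ofReal ((1+b)^d * vA) := by
            rw [ENNReal.ofReal_mul (by positivity)]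
        _ ≤ ENNReal.ofReal ((volume S).toReal) := ENNReal.ofReal_le_ofReal hreal
        _ = volume S := ENNReal.ofReal_toReal hSfin

end infl



theorem part2 (d m : ℕ) (hd : 0 < d) (hm : 2 ≤ m) :
    ∀ (ι : Type) (T : ι → Set (Fin d → ℝ)) (color : ι → Fin (m ^ d)) (r : ℝ),
      (∀ i, MeasurableSet (T i)) →
      (∀ i, IsClosed (T i)) →
      (∀ i, Bornology.IsBounded (T i)) →
      (∀ i, volume (T i) ≤ 1) →
      (∀ x : Fin d → ℝ, ∃ i, x ∈ T i) →
      (∀ i j, i ≠ j → Disjoint (interior (T i)) (interior (T j))) →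
      (∀ R : ℝ, {i | (T i ∩ Metric.closedBall 0 R).Nonempty}.Finite) →
      (∀ i j, i ≠ j → color i = color j →
        ∀ x ∈ T i, ∀ y ∈ T j, 2 * r ≤ dist x y) →
      r ≤ ((m : ℝ) - 1) / 2 := by
  classical
  intro ι T color r hmeas hclosed hbound hvol hcover hint hloc hsep
  by_contra hr
  push_neg at hr
  have hm1 : (1:ℝ) ≤ (m:ℝ) - 1 := by
    have : (2:ℝ) ≤ (m:ℝ) := by exact_mod_cast hm
    linarith
  set γ : ℝ := r - ((m:ℝ)-1)/2 with hγ
  have hγpos : 0 < γ := by rw [hγ]; linarith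
  set b : ℝ := ((m:ℝ)-1) + γ/2 with hbdef
  set ε : ℝ := γ/4 with hεdef
  have hb : 0 < b := by rw [hbdef]; linarith
  have hε : 0 < ε := by rw [hεdef]; linarith
  have h1b : (m:ℝ) < 1 + b := by rw [hbdef]; linarith
  have main : ∀ n : ℕ, ((1+b) * n)^d ≤ ((m:ℝ) * (n + 2*(ε+b)))^d := by
    intro n
    set Q : Set (Fin d → ℝ) := {x | ∀ k, x k ∈ Set.Icc (0:ℝ) n} with hQ
    set Q' : Set (Fin d → ℝ) := {x | ∀ k, x k ∈ Set.Icc (-(ε+b)) (n + (ε+b))} with hQ'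
    have hQpi : Q = Set.pi Set.univ (fun _ => Set.Icc (0:ℝ) n) := by
      ext x
      constructor
      · intro h k _; exact h k
      · intro h k; exact h k (Set.mem_univ k)
    have hQ'pi : Q' = Set.pi Set.univ (fun _ => Set.Icc (-(ε+b)) ((n:ℝ) + (ε+b))) := by
      ext x
      constructor
      · intro h k _; exact h k
      · intro h k; exact h k (Set.mem_univ k)
    have hQm : MeasurableSet Q := by
      rw [hQpi]; exact MeasurableSet.univ_pi fun _ => measurableSet_Icc
    have hQvol : volume Q = (ENNReal.ofReal n)^d := by
      rw [hQpi, volume_pi_pi]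
      simp [Real.volume_Icc, Finset.prod_const, Finset.card_univ]
    have hQ'vol : volume Q' = (ENNReal.ofReal ((n:ℝ) + 2*(ε+b)))^d := by
      rw [hQ'pi, volume_pi_pi]
      simp only [Real.volume_Icc]
      rw [Finset.prod_const, Finset.card_univ, Fintype.card_fin]
      congr 1
      ring
    set F := (hloc n).toFinset with hF
    set A : ι → Set (Fin d → ℝ) := fun i => T i ∩ Q with hA
    have hQF : Q ⊆ ⋃ i ∈ F, A i := by
      intro x hx
      obtain ⟨i, hi⟩ := hcover x
      have hball : x ∈ Metric.closedBall (0 : Fin d → ℝ) n := by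
        rw [Metric.mem_closedBall]
        refine (dist_pi_le_iff (by positivity)).2 fun k => ?_
        have := hx k
        rw [Set.mem_Icc] at this
        rw [Real.dist_eq]
        simp only [Pi.zero_apply, sub_zero]
        rw [abs_le]
        exact ⟨by linarith [this.1], this.2⟩
      have hiF : i ∈ F := (hloc n).mem_toFinset.mpr ⟨x, hi, hball⟩
      exact Set.mem_biUnion hiF ⟨hi, hx⟩
    have hinfl : ∀ i : ι, ∃ S : Set (Fin d → ℝ), MeasurableSet S ∧ volume S ≠ ⊤ ∧
        (∀ x ∈ S, ∃ u : Fin d → ℝ, ∃ a ∈ A i, (∀ k, |u k - a k| < ε) ∧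
          (∀ k, 0 ≤ x k - u k ∧ x k - u k < b)) ∧
        ENNReal.ofReal ((1+b)^d) * volume (A i) ≤ volume S := by
      intro i
      exact inflation hd (A i) ((hmeas i).inter hQm)
        ((hbound i).subset Set.inter_subset_left)
        (le_trans (measure_mono Set.inter_subset_left) (hvol i)) ε b hε hb
    choose S hSm hSfin hSstruct hSvol using hinfl
    have hSQ' : ∀ i, S i ⊆ Q' := by
      intro i x hx
      obtain ⟨u, a, haA, hu, hv⟩ := hSstruct i x hx
      intro k
      have h1 := abs_sub_lt_iff.mp (hu k)
      have h2 := hv k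
      have h3 : a k ∈ Set.Icc (0:ℝ) n := haA.2 k
      rw [Set.mem_Icc] at h3 ⊢
      obtain ⟨h2a, h2b⟩ := h2
      exact ⟨by linarith [h1.1, h1.2, h3.1], by linarith [h1.1, h1.2, h3.2]⟩
    have hdisjS : ∀ i j, i ≠ j → color i = color j → Disjoint (S i) (S j) := by
      intro i j hne hcol
      rw [Set.disjoint_left]
      intro x hxi hxj
      obtain ⟨u, a, haA, hu, hv⟩ := hSstruct i x hxi
      obtain ⟨u', a', haA', hu', hv'⟩ := hSstruct j x hxj
      have hd2 : dist a a' < b + 2*ε := by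
        rw [dist_pi_lt_iff (by linarith)]
        intro k
        rw [Real.dist_eq, abs_sub_lt_iff]
        have e1 := abs_sub_lt_iff.mp (hu k)
        have e2 := abs_sub_lt_iff.mp (hu' k)
        have e3 := hv k
        have e4 := hv' k
        constructor <;> linarith [e1.1, e1.2, e2.1, e2.2, e3.1, e3.2, e4.1, e4.2]
      have hge := hsep i j hne hcol a haA.1 a' haA'.1
      have h2r : 2*r = (m:ℝ)-1 + 2*γ := by rw [hγ]; ring
      have hbe : b + 2*ε = (m:ℝ)-1 + γ := by rw [hbdef, hεdef]; ring
      linarith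
    set K := ENNReal.ofReal ((1+b)^d) with hK
    have step1 : volume Q ≤ ∑ i ∈ F, volume (A i) :=
      le_trans (measure_mono hQF) (measure_biUnion_finset_le F A)
    have step2 : K * volume Q ≤ ∑ i ∈ F, volume (S i) := by
      calc K * volume Q ≤ K * ∑ i ∈ F, volume (A i) := mul_le_mul_right step1 K
        _ = ∑ i ∈ F, K * volume (A i) := Finset.mul_sum _ _ _
        _ ≤ ∑ i ∈ F, volume (S i) := Finset.sum_le_sum fun i _ => hSvol i
    have step3 : ∑ i ∈ F, volume (S i) ≤ (m^d : ℕ) * volume Q' := by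
      have hfib : ∑ c : Fin (m^d), ∑ i ∈ F.filter (fun i => color i = c), volume (S i)
          = ∑ i ∈ F, volume (S i) := Finset.sum_fiberwise F color (fun i => volume (S i))
      rw [← hfib]
      have hinner : ∀ c : Fin (m^d),
          ∑ i ∈ F.filter (fun i => color i = c), volume (S i) ≤ volume Q' := by
        intro c
        have hpd : ((F.filter (fun i => color i = c) : Finset ι) : Set ι).PairwiseDisjoint S := by
          intro i hi j hj hne
          have hci := (Finset.mem_filter.mp (Finset.mem_coe.mp hi)).2
          have hcj := (Finset.mem_filter.mp (Finset.mem_coe.mp hj)).2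
          exact hdisjS i j hne (hci.trans hcj.symm)
        rw [← measure_biUnion_finset hpd (fun i _ => hSm i)]
        exact measure_mono (Set.iUnion₂_subset fun i _ => hSQ' i)
      calc ∑ c : Fin (m^d), ∑ i ∈ F.filter (fun i => color i = c), volume (S i)
          ≤ ∑ c2 : Fin (m^d), volume Q' := Finset.sum_le_sum fun c _ => hinner c
        _ = (m^d : ℕ) * volume Q' := by
            rw [Finset.sum_const, Finset.card_univ, Fintype.card_fin, nsmul_eq_mul]
    have hcomb : K * (ENNReal.ofReal n)^d ≤ (m^d : ℕ) * (ENNReal.ofReal ((n:ℝ) + 2*(ε+b)))^d := by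
      rw [← hQvol, ← hQ'vol]
      exact le_trans step2 step3
    -- convert to reals
    have hRHSfin : ((m^d : ℕ) : ℝ≥0∞) * (ENNReal.ofReal ((n:ℝ) + 2*(ε+b)))^d ≠ ⊤ := by
      apply ENNReal.mul_ne_top (by simp)
      exact ENNReal.pow_ne_top ENNReal.ofReal_ne_top
    have hreal := ENNReal.toReal_mono hRHSfin hcomb
    rw [ENNReal.toReal_mul, ENNReal.toReal_mul, ENNReal.toReal_pow, ENNReal.toReal_pow,
      ENNReal.toReal_ofReal (by positivity), ENNReal.toReal_ofReal (by positivity),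
      ENNReal.toReal_ofReal (by positivity), ENNReal.toReal_natCast] at hreal
    calc ((1+b) * n)^d = (1+b)^d * (n:ℝ)^d := mul_pow _ _ _
      _ ≤ (m^d : ℕ) * ((n:ℝ) + 2*(ε+b))^d := hreal
      _ = ((m:ℝ) * ((n:ℝ) + 2*(ε+b)))^d := by
          rw [mul_pow]
          norm_num
  obtain ⟨n, hn⟩ := exists_nat_gt ((m:ℝ) * (2*(ε+b)) / ((1+b) - m))
  have h := main n
  have hX : (0:ℝ) ≤ (1+b) * n := by positivity
  have hY : (0:ℝ) ≤ (m:ℝ) * (n + 2*(ε+b)) := by positivity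
  have hXY : (1+b) * n ≤ (m:ℝ) * (n + 2*(ε+b)) := by
    exact (pow_le_pow_iff_left₀ hX hY (by omega)).mp h
  have hnpos : ((m:ℝ) * (2*(ε+b)) / ((1+b) - m)) < n := hn
  rw [div_lt_iff₀ (by linarith)] at hnpos
  nlinarith

theorem part1 (d m : ℕ) (hd : 0 < d) (hm : 2 ≤ m) :
    IsLeast {t : ℝ | ∃ z z' : Fin d → ℤ, z ≠ z' ∧ cubeColor d m z = cubeColor d m z' ∧
        ∃ x ∈ intUnitCube d z, ∃ y ∈ intUnitCube d z', t = dist x y} ((m : ℝ) - 1) := by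
  have hm1 : (1:ℝ) ≤ (m:ℝ) - 1 := by
    have : (2:ℝ) ≤ m := by exact_mod_cast hm
    linarith
  constructor
  · refine ⟨0, fun _ => (m:ℤ), ?_, ?_, fun _ => 1, ?_, fun _ => (m:ℝ), ?_, ?_⟩
    · intro h
      have := congrFun h ⟨0, hd⟩
      simp at this
      omega
    · funext i
      simp [cubeColor]
    · intro i; simp [intUnitCube]
    · intro i
      constructor
      · push_cast; exact le_rfl
      · push_cast; linarith
    · have h1 : dist ((fun _ => (1:ℝ)) : Fin d → ℝ) (fun _ => (m:ℝ)) ≤ (m:ℝ) - 1 := by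
        refine (dist_pi_le_iff (by linarith)).2 fun i => ?_
        rw [Real.dist_eq, abs_sub_comm, abs_of_nonneg (by linarith)]
      have h2 : (m:ℝ) - 1 ≤ dist ((fun _ => (1:ℝ)) : Fin d → ℝ) (fun _ => (m:ℝ)) := by
        calc (m:ℝ) - 1 = dist ((1:ℝ)) ((m:ℝ)) := by
              rw [Real.dist_eq, abs_sub_comm, abs_of_nonneg (by linarith)]
          _ ≤ _ := dist_le_pi_dist (fun _ => (1:ℝ)) (fun _ => (m:ℝ)) (⟨0, hd⟩ : Fin d)
      exact (le_antisymm h1 h2).symm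
  · rintro t ⟨z, z', hne, hc, x, hx, y, hy, rfl⟩
    obtain ⟨i, hi⟩ := Function.ne_iff.mp hne
    have hdvd : (m:ℤ) ∣ z' i - z i :=
      (ZMod.intCast_eq_intCast_iff_dvd_sub _ _ _).mp (congrFun hc i)
    have habs : (m:ℤ) ≤ |z' i - z i| :=
      Int.le_of_dvd (abs_pos.mpr (sub_ne_zero.mpr (Ne.symm hi))) ((dvd_abs _ _).mpr hdvd)
    have h1 := hx i; have h2 := hy i
    simp only [intUnitCube, Set.mem_setOf_eq, Set.mem_Icc] at h1 h2
    have key : (m:ℝ) - 1 ≤ |x i - y i| := by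
      rcases abs_cases ((z':Fin d → ℤ) i - z i) with ⟨he, _⟩ | ⟨he, _⟩
      · rw [he] at habs
        have : (m:ℝ) ≤ (z' i : ℝ) - (z i : ℝ) := by exact_mod_cast habs
        have : (m:ℝ) - 1 ≤ y i - x i := by linarith [h1.1, h1.2, h2.1, h2.2]
        calc (m:ℝ) - 1 ≤ y i - x i := this
          _ ≤ |x i - y i| := by rw [abs_sub_comm]; exact le_abs_self _
      · rw [he] at habs
        have : (m:ℝ) ≤ (z i : ℝ) - (z' i : ℝ) := by
          have : (m:ℤ) ≤ z i - z' i := by omega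
          exact_mod_cast this
        have : (m:ℝ) - 1 ≤ x i - y i := by linarith [h1.1, h1.2, h2.1, h2.2]
        exact le_trans this (le_abs_self _)
    calc (m:ℝ) - 1 ≤ |x i - y i| := key
      _ = dist (x i) (y i) := (Real.dist_eq _ _).symm
      _ ≤ dist x y := dist_le_pi_dist x y i

end aux

/-- For the L∞ metric in ℝ^d with k = m^d colors (m ≥ 2), the periodic
unit-cube tiling colored with period m in each coordinate achieves minimal L∞ distance
m−1 between same-colored points in different tiles (hence L∞ fault tolerance (m−1)/2);
moreover, no tiling of ℝ^d with m^d colors and tiles of volume at most 1 achieves L∞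
fault tolerance greater than (m−1)/2. -/
theorem stmt_19 (d m : ℕ) (hd : 0 < d) (hm : 2 ≤ m) :
    (IsLeast {t : ℝ | ∃ z z' : Fin d → ℤ, z ≠ z' ∧ cubeColor d m z = cubeColor d m z' ∧
        ∃ x ∈ intUnitCube d z, ∃ y ∈ intUnitCube d z', t = dist x y} ((m : ℝ) - 1)) ∧
    (∀ (ι : Type) (T : ι → Set (Fin d → ℝ)) (color : ι → Fin (m ^ d)) (r : ℝ),
      (∀ i, MeasurableSet (T i)) →
      (∀ i, IsClosed (T i)) →
      (∀ i, Bornology.IsBounded (T i)) →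
      (∀ i, volume (T i) ≤ 1) →
      (∀ x : Fin d → ℝ, ∃ i, x ∈ T i) →
      (∀ i j, i ≠ j → Disjoint (interior (T i)) (interior (T j))) →
      (∀ R : ℝ, {i | (T i ∩ Metric.closedBall 0 R).Nonempty}.Finite) →
      (∀ i j, i ≠ j → color i = color j →
        ∀ x ∈ T i, ∀ y ∈ T j, 2 * r ≤ dist x y) →
      r ≤ ((m : ℝ) - 1) / 2) := by
  exact ⟨part1 d m hd hm, part2 d m hd hm⟩
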